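/- Fix n > 3 and let 𝒢_n be the set of isomorphism classes of simple graphs on n vertices. Let A, C ⊆ 𝒢_n be the classes of graphs G of order n and size m satisfying m·M1(G) > n·M2(G) and m·M1(G) < n·M2(G), respectively. Then |A| < |C|. -/

import Mathlib

/-- Degree of a vertex (classical, so it works for any graph on a finite vertex type). -/
noncomputable def gdeg {V : Type*} [Fintype V] (G : SimpleGraph V) (v : V) : ℕ := by
  classical exact G.degree v

/-- First Zagreb index: sum of squares of the vertex degrees. -/
noncomputable def zagrebM1 {V : Type*} [Fintype V] (G : SimpleGraph V) : ℕ :=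
  ∑ v, gdeg G v ^ 2

/-- Second Zagreb index: sum of d(u)·d(v) over the edges uv. -/
noncomputable def zagrebM2 {V : Type*} [Fintype V] (G : SimpleGraph V) : ℕ := by
  classical exact
    ∑ e ∈ G.edgeFinset,
      Sym2.lift ⟨fun u v => gdeg G u * gdeg G v, fun u v => by simp [Nat.mul_comm]⟩ e

/-- The size (number of edges) of a graph. -/
noncomputable def gsize {V : Type*} [Fintype V] (G : SimpleGraph V) : ℕ := by
  classical exact G.edgeFinset.card

/-- A graph is `r`-regular if every vertex has degree `r`. -/
def gregOfDeg {V : Type*} [Fintype V] (G : SimpleGraph V) (r : ℕ) : Prop :=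
  ∀ v, gdeg G v = r

/-- A graph is regular if all its vertices have the same degree. -/
def gregular {V : Type*} [Fintype V] (G : SimpleGraph V) : Prop :=
  ∃ r, gregOfDeg G r

/-- The setoid identifying isomorphic simple graphs on `Fin n`. -/
def graphIsoSetoid (n : ℕ) : Setoid (SimpleGraph (Fin n)) where
  r G H := Nonempty (G ≃g H)
  iseqv := ⟨fun _ => ⟨SimpleGraph.Iso.refl⟩,
    fun ⟨f⟩ => ⟨f.symm⟩, fun ⟨f⟩ ⟨g⟩ => ⟨f.trans g⟩⟩

/-- `𝒢_n`: the type of isomorphism classes of simple graphs on `n` vertices. -/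
def IsoClasses (n : ℕ) := Quotient (graphIsoSetoid n)

/-- The set of isomorphism classes of graphs on `n` vertices satisfying a predicate. -/
def isoClassesOf (n : ℕ) (P : SimpleGraph (Fin n) → Prop) : Set (IsoClasses n) :=
  Quotient.mk (graphIsoSetoid n) '' {G | P G}

open Finset

section helpers
open scoped Classical
variable {V : Type*} [Fintype V]

lemma gdeg_eq_sum (G : SimpleGraph V) (v : V) :
    gdeg G v = ∑ u, (if G.Adj v u then 1 else 0) := by
  classical
  unfold gdeg
  rw [SimpleGraph.degree]
  rw [show G.neighborFinset v = univ.filter (G.Adj v) from by ext u; simp]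
  rw [Finset.card_filter]

lemma edge_sum_eq (G : SimpleGraph V) (f : V → V → ℕ) (hf : ∀ u v, f u v = f v u) :
    2 * ∑ e ∈ G.edgeFinset, Sym2.lift ⟨f, hf⟩ e
      = ∑ u, ∑ v, (if G.Adj u v then f u v else 0) := by
  classical
  have h1 : ∑ u, ∑ v, (if G.Adj u v then f u v else 0)
      = ∑ p ∈ (univ ×ˢ univ : Finset (V × V)).filter (fun p => G.Adj p.1 p.2),
          f p.1 p.2 := by
    rw [Finset.sum_filter, Finset.sum_product]
  rw [h1]
  rw [← Finset.sum_fiberwise_of_maps_to (g := fun p : V × V => Sym2.mk p.1 p.2)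
      (t := G.edgeFinset) (fun p hp => by
        simp only [Finset.mem_filter] at hp
        simpa [SimpleGraph.mem_edgeFinset] using hp.2)]
  rw [Finset.mul_sum]
  refine Finset.sum_congr rfl ?_
  intro e he
  induction e with
  | _ a b =>
    have hab : G.Adj a b := by simpa [SimpleGraph.mem_edgeFinset] using he
    have hfib : ((univ ×ˢ univ : Finset (V × V)).filter (fun p => G.Adj p.1 p.2)).filter
        (fun p => Sym2.mk p.1 p.2 = s(a, b)) = {(a, b), (b, a)} := by
      ext p
      obtain ⟨x, y⟩ := p
      simp only [Finset.mem_filter, Finset.mem_insert, Finset.mem_singleton,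
        Finset.mem_product, Finset.mem_univ, true_and, Sym2.eq_iff,
        Prod.mk.injEq, Prod.swap_prod_mk]
      constructor
      · rintro ⟨-, (⟨rfl, rfl⟩ | ⟨rfl, rfl⟩)⟩
        · left; exact ⟨rfl, rfl⟩
        · right; exact ⟨rfl, rfl⟩
      · rintro (⟨rfl, rfl⟩ | ⟨rfl, rfl⟩)
        · exact ⟨hab, Or.inl ⟨rfl, rfl⟩⟩
        · exact ⟨hab.symm, Or.inr ⟨rfl, rfl⟩⟩
    rw [hfib]
    rw [Finset.sum_pair (by simp [hab.ne] : ((a,b) : V × V) ≠ (b,a))]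
    simp [Sym2.lift_mk, hf b a, two_mul]
end helpers

section helpers2
open scoped Classical
variable {V : Type*} [Fintype V]

lemma two_mul_zagrebM2 (G : SimpleGraph V) :
    2 * zagrebM2 G = ∑ u, ∑ v, (if G.Adj u v then gdeg G u * gdeg G v else 0) := by
  classical
  rw [← edge_sum_eq G _ (fun u v => by rw [Nat.mul_comm])]
  congr 1

lemma two_mul_gsize (G : SimpleGraph V) :
    2 * gsize G = ∑ u, ∑ v, (if G.Adj u v then 1 else 0) := by
  classical
  rw [← edge_sum_eq G (fun _ _ => 1) (fun _ _ => rfl)]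
  congr 1
  unfold gsize
  rw [Finset.card_eq_sum_ones]
  refine Finset.sum_congr rfl fun e _ => ?_
  exact Sym2.ind (fun a b => rfl) e

lemma handshake (G : SimpleGraph V) : ∑ v, gdeg G v = 2 * gsize G := by
  rw [two_mul_gsize]
  exact Finset.sum_congr rfl fun v _ => gdeg_eq_sum G v

lemma gdeg_compl_add (G : SimpleGraph V) (v : V) :
    gdeg Gᶜ v + gdeg G v = Fintype.card V - 1 := by
  classical
  rw [gdeg_eq_sum, gdeg_eq_sum, ← Finset.sum_add_distrib]
  have h2 : (∑ u, if v ≠ u then (1:ℕ) else 0) = Fintype.card V - 1 := by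
    rw [← Finset.card_filter, Finset.filter_ne,
      Finset.card_erase_of_mem (Finset.mem_univ v), Finset.card_univ]
  refine Eq.trans (Finset.sum_congr rfl fun u _ => ?_) h2
  by_cases h : v = u
  · subst h; simp
  · by_cases ha : G.Adj v u
    · simp [ha, h, SimpleGraph.compl_adj]
    · simp [ha, h, SimpleGraph.compl_adj]
end helpers2

section intlemmas
open scoped Classical
variable {V : Type*} [Fintype V]

private lemma ite_mul_left (p : Prop) [Decidable p] (a b : ℤ) :
    (if p then a * b else 0) = a * (if p then b else 0) := by
  by_cases h : p <;> simp [h]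

lemma sum_ite_adj_one (G : SimpleGraph V) (u : V) :
    (∑ v, if G.Adj u v then (1:ℤ) else 0) = (gdeg G u : ℤ) := by
  rw [gdeg_eq_sum]
  push_cast
  refine Finset.sum_congr rfl fun v _ => ?_
  by_cases h : G.Adj u v <;> simp [h]

lemma offdiag_sum (g : V → ℤ) :
    (∑ u, ∑ v, if u ≠ v then g u * g v else 0)
      = (∑ v, g v)^2 - ∑ v, (g v)^2 := by
  classical
  have inner : ∀ u, (∑ v, if u ≠ v then g u * g v else 0)
      = g u * (∑ v, g v) - g u * g u := by
    intro u
    have : ∀ v, (if u ≠ v then g u * g v else 0)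
        = g u * g v - (if u = v then g u * g v else 0) := by
      intro v; by_cases h : u = v <;> simp [h]
    rw [Finset.sum_congr rfl fun v _ => this v, Finset.sum_sub_distrib,
      Finset.sum_ite_eq _ u (fun v => g u * g v) , if_pos (Finset.mem_univ u),
      ← Finset.mul_sum]
  rw [Finset.sum_congr rfl fun u _ => inner u, Finset.sum_sub_distrib,
    ← Finset.sum_mul, sq]
  congr 1
  exact Finset.sum_congr rfl fun v _ => (sq (g v)).symm ▸ rfl

lemma adj_sum_one (G : SimpleGraph V) :
    (∑ u, ∑ v, if G.Adj u v then (1:ℤ) else 0) = ∑ v, (gdeg G v : ℤ) :=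
  Finset.sum_congr rfl fun u _ => sum_ite_adj_one G u

lemma adj_sum_left (G : SimpleGraph V) :
    (∑ u, ∑ v, if G.Adj u v then (gdeg G u : ℤ) else 0)
      = ∑ v, (gdeg G v : ℤ)^2 := by
  refine Finset.sum_congr rfl fun u _ => ?_
  have : ∀ v, (if G.Adj u v then (gdeg G u : ℤ) else 0)
      = (gdeg G u : ℤ) * (if G.Adj u v then (1:ℤ) else 0) := by
    intro v; by_cases h : G.Adj u v <;> simp [h]
  rw [Finset.sum_congr rfl fun v _ => this v, ← Finset.mul_sum,
    sum_ite_adj_one G u, sq]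

lemma adj_sum_right (G : SimpleGraph V) :
    (∑ u, ∑ v, if G.Adj u v then (gdeg G v : ℤ) else 0)
      = ∑ v, (gdeg G v : ℤ)^2 := by
  rw [Finset.sum_comm]
  refine Finset.sum_congr rfl fun v _ => ?_
  have : ∀ u, (if G.Adj u v then (gdeg G v : ℤ) else 0)
      = (gdeg G v : ℤ) * (if G.Adj v u then (1:ℤ) else 0) := by
    intro u
    by_cases h : G.Adj u v
    · simp [h, h.symm]
    · have h' : ¬ G.Adj v u := fun hc => h hc.symm
      simp [h, h']
  rw [Finset.sum_congr rfl fun u _ => this u, ← Finset.mul_sum,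
    sum_ite_adj_one G v, sq]
end intlemmas

section master
open scoped Classical
variable {V : Type*} [Fintype V]

lemma int_gdeg_compl (G : SimpleGraph V) (v : V) :
    (gdeg Gᶜ v : ℤ) = ((Fintype.card V : ℤ) - 1) - gdeg G v := by
  have h := gdeg_compl_add G v
  have hpos : 0 < Fintype.card V := Fintype.card_pos_iff.mpr ⟨v⟩
  omega

lemma int_handshake (G : SimpleGraph V) :
    2 * (gsize G : ℤ) = ∑ v, (gdeg G v : ℤ) := by
  exact_mod_cast (handshake G).symm

lemma int_M1 (G : SimpleGraph V) :
    (zagrebM1 G : ℤ) = ∑ v, (gdeg G v : ℤ)^2 := by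
  unfold zagrebM1; push_cast; rfl

lemma int_two_M2 (G : SimpleGraph V) :
    2 * (zagrebM2 G : ℤ)
      = ∑ u, ∑ v, (if G.Adj u v then (gdeg G u : ℤ) * (gdeg G v : ℤ) else 0) := by
  have h := congrArg (Nat.cast : ℕ → ℤ) (two_mul_zagrebM2 G)
  push_cast at h
  exact h

lemma compl_handshake (G : SimpleGraph V) :
    2 * (gsize Gᶜ : ℤ)
      = (Fintype.card V : ℤ) * ((Fintype.card V : ℤ) - 1) - ∑ v, (gdeg G v : ℤ) := by
  rw [int_handshake, Finset.sum_congr rfl fun v _ => int_gdeg_compl G v,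
    Finset.sum_sub_distrib, Finset.sum_const, Finset.card_univ, nsmul_eq_mul]

lemma compl_M1 (G : SimpleGraph V) :
    (zagrebM1 Gᶜ : ℤ)
      = (Fintype.card V : ℤ) * ((Fintype.card V : ℤ) - 1)^2
        - 2 * ((Fintype.card V : ℤ) - 1) * (∑ v, (gdeg G v : ℤ))
        + ∑ v, (gdeg G v : ℤ)^2 := by
  rw [int_M1, Finset.sum_congr rfl fun v _ => by rw [int_gdeg_compl G v]]
  have expand : ∀ v, (((Fintype.card V : ℤ) - 1) - gdeg G v)^2
      = ((Fintype.card V : ℤ) - 1)^2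
        - 2 * ((Fintype.card V : ℤ) - 1) * (gdeg G v : ℤ) + (gdeg G v : ℤ)^2 :=
    fun v => by ring
  rw [Finset.sum_congr rfl fun v _ => expand v]
  rw [Finset.sum_add_distrib, Finset.sum_sub_distrib, Finset.sum_const,
    Finset.card_univ, nsmul_eq_mul, ← Finset.mul_sum]

lemma compl_two_M2 (G : SimpleGraph V) :
    2 * (zagrebM2 Gᶜ : ℤ)
      = (((Fintype.card V : ℤ) * ((Fintype.card V : ℤ) - 1) - ∑ v, (gdeg G v : ℤ))^2
          - ((Fintype.card V : ℤ) * ((Fintype.card V : ℤ) - 1)^2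
              - 2 * ((Fintype.card V : ℤ) - 1) * (∑ v, (gdeg G v : ℤ))
              + ∑ v, (gdeg G v : ℤ)^2))
        - (((Fintype.card V : ℤ) - 1)^2 * (∑ v, (gdeg G v : ℤ))
            - 2 * ((Fintype.card V : ℤ) - 1) * (∑ v, (gdeg G v : ℤ)^2)
            + ∑ u, ∑ v, (if G.Adj u v then (gdeg G u : ℤ) * (gdeg G v : ℤ) else 0)) := by
  classical
  rw [int_two_M2]
  refine Eq.trans (Finset.sum_congr
    (g := fun u => ∑ v,
      ((if u ≠ v then ((Fintype.card V : ℤ) - 1 - (gdeg G u : ℤ)) * ((Fintype.card V : ℤ) - 1 - (gdeg G v : ℤ)) else 0)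
        - (if G.Adj u v then ((Fintype.card V : ℤ) - 1 - (gdeg G u : ℤ)) * ((Fintype.card V : ℤ) - 1 - (gdeg G v : ℤ)) else 0)))
    rfl fun u _ => Finset.sum_congr rfl fun v _ => ?_) ?_
  · by_cases he : u = v
    · subst he; simp
    · by_cases ha : G.Adj u v
      · have hc : ¬ Gᶜ.Adj u v := by simp [SimpleGraph.compl_adj, ha]
        simp [hc, ha, he]
      · have hc : Gᶜ.Adj u v := by simp [SimpleGraph.compl_adj, ha, he]
        rw [if_pos hc, if_pos (he : u ≠ v), if_neg ha, sub_zero,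
          int_gdeg_compl, int_gdeg_compl]
  · rw [Finset.sum_congr rfl fun u (_ : u ∈ Finset.univ) => Finset.sum_sub_distrib _ _]
    rw [Finset.sum_sub_distrib]
    rw [offdiag_sum (fun v => (Fintype.card V : ℤ) - 1 - (gdeg G v : ℤ))]
    have step3 : ∀ u v : V,
        (if G.Adj u v then ((Fintype.card V : ℤ) - 1 - (gdeg G u : ℤ)) * ((Fintype.card V : ℤ) - 1 - (gdeg G v : ℤ)) else 0)
        = ((Fintype.card V : ℤ) - 1)^2 * (if G.Adj u v then (1:ℤ) else 0)
          - ((Fintype.card V : ℤ) - 1) * (if G.Adj u v then (gdeg G u : ℤ) else 0)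
          - ((Fintype.card V : ℤ) - 1) * (if G.Adj u v then (gdeg G v : ℤ) else 0)
          + (if G.Adj u v then (gdeg G u : ℤ) * (gdeg G v : ℤ) else 0) := by
      intro u v
      by_cases h : G.Adj u v
      · simp only [if_pos h]; ring
      · simp only [if_neg h]; ring
    rw [Finset.sum_congr rfl fun u (_ : u ∈ Finset.univ) =>
      Finset.sum_congr rfl fun v (_ : v ∈ Finset.univ) => step3 u v]
    simp only [Finset.sum_add_distrib, Finset.sum_sub_distrib, ← Finset.mul_sum]
    rw [adj_sum_one, adj_sum_left, adj_sum_right]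
    have expand : ∀ v : V, ((Fintype.card V : ℤ) - 1 - (gdeg G v : ℤ))^2
        = ((Fintype.card V : ℤ) - 1)^2 - 2 * ((Fintype.card V : ℤ) - 1) * (gdeg G v : ℤ)
          + (gdeg G v : ℤ)^2 := fun v => by ring
    have hsq : (∑ v, ((Fintype.card V : ℤ) - 1 - (gdeg G v : ℤ))^2)
        = (Fintype.card V : ℤ) * ((Fintype.card V : ℤ) - 1)^2
          - 2 * ((Fintype.card V : ℤ) - 1) * (∑ v, (gdeg G v : ℤ))
          + ∑ v, (gdeg G v : ℤ)^2 := by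
      rw [Finset.sum_congr rfl fun v (_ : v ∈ Finset.univ) => expand v]
      rw [Finset.sum_add_distrib, Finset.sum_sub_distrib, Finset.sum_const,
        Finset.card_univ, nsmul_eq_mul, ← Finset.mul_sum]
    rw [hsq]
    simp only [Finset.sum_const, Finset.card_univ, nsmul_eq_mul, mul_one]
    ring

lemma master_identity (G : SimpleGraph V) :
    4 * ((Fintype.card V : ℤ) * zagrebM2 Gᶜ - gsize Gᶜ * zagrebM1 Gᶜ)
      + 4 * ((Fintype.card V : ℤ) * zagrebM2 G - gsize G * zagrebM1 G)
      = 2 * ((Fintype.card V : ℤ) - 2) *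
          ((Fintype.card V : ℤ) * (∑ v, (gdeg G v : ℤ)^2) - (∑ v, (gdeg G v : ℤ))^2) := by
  have key1 : 4 * ((Fintype.card V : ℤ) * zagrebM2 Gᶜ - gsize Gᶜ * zagrebM1 Gᶜ)
      = 2 * (Fintype.card V : ℤ) * (2 * (zagrebM2 Gᶜ : ℤ))
        - (2 * (gsize Gᶜ : ℤ)) * (zagrebM1 Gᶜ : ℤ) * 2 := by ring
  have key2 : 4 * ((Fintype.card V : ℤ) * zagrebM2 G - gsize G * zagrebM1 G)
      = 2 * (Fintype.card V : ℤ) * (2 * (zagrebM2 G : ℤ))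
        - (2 * (gsize G : ℤ)) * (zagrebM1 G : ℤ) * 2 := by ring
  rw [key1, key2, compl_two_M2, compl_handshake, compl_M1, int_two_M2, int_handshake,
    int_M1]
  ring

lemma zagreb_flip (G : SimpleGraph V)
    (h : (Fintype.card V : ℤ) * zagrebM2 G < gsize G * zagrebM1 G)
    (hn : 2 ≤ Fintype.card V) :
    (gsize Gᶜ : ℤ) * zagrebM1 Gᶜ < (Fintype.card V : ℤ) * zagrebM2 Gᶜ := by
  have hid := master_identity G
  have hcs : (∑ v, (gdeg G v : ℤ))^2
      ≤ (Fintype.card V : ℤ) * (∑ v, (gdeg G v : ℤ)^2) := by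
    have := sq_sum_le_card_mul_sum_sq (s := (Finset.univ : Finset V))
      (f := fun v => (gdeg G v : ℤ))
    simpa [Finset.card_univ] using this
  have h2 : (0:ℤ) ≤ (Fintype.card V : ℤ) - 2 := by
    have : (2:ℤ) ≤ (Fintype.card V : ℤ) := by exact_mod_cast hn
    omega
  nlinarith [hid, hcs, h2, h]

end master

section witness
open scoped Classical

def oneEdge (n : ℕ) : SimpleGraph (Fin n) where
  Adj u v := (u.val = 0 ∧ v.val = 1) ∨ (u.val = 1 ∧ v.val = 0)
  symm := ⟨by intro u v h; tauto⟩
  loopless := ⟨by intro u h; rcases h with ⟨h1, h2⟩ | ⟨h1, h2⟩ <;> omega⟩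

variable {n : ℕ}

lemma oneEdge_deg (hn : 2 ≤ n) (v : Fin n) :
    gdeg (oneEdge n) v
      = (if v = (⟨0, by omega⟩ : Fin n) then 1 else 0)
        + (if v = (⟨1, by omega⟩ : Fin n) then 1 else 0) := by
  rw [gdeg_eq_sum]
  by_cases h0 : v.val = 0
  · have hv : v = (⟨0, by omega⟩ : Fin n) := Fin.ext h0
    have hne : v ≠ (⟨1, by omega⟩ : Fin n) := by
      intro h; rw [Fin.ext_iff] at h; simp at h; omega
    have hadj : ∀ u : Fin n, (oneEdge n).Adj v u ↔ u = (⟨1, by omega⟩ : Fin n) := by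
      intro u
      constructor
      · rintro (⟨-, h⟩ | ⟨h1, -⟩)
        · exact Fin.ext h
        · omega
      · rintro rfl; exact Or.inl ⟨h0, rfl⟩
    have : ∀ u : Fin n, (if (oneEdge n).Adj v u then (1:ℕ) else 0)
        = if u = (⟨1, by omega⟩ : Fin n) then 1 else 0 := by
      intro u; by_cases h : (oneEdge n).Adj v u
      · rw [if_pos h, if_pos ((hadj u).mp h)]
      · rw [if_neg h, if_neg (fun hu => h ((hadj u).mpr hu))]
    rw [Finset.sum_congr rfl fun u _ => this u, Finset.sum_ite_eq' _ _ (fun _ => 1),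
      if_pos (Finset.mem_univ _), if_pos hv, if_neg hne]
  · by_cases h1 : v.val = 1
    · have hv : v = (⟨1, by omega⟩ : Fin n) := Fin.ext h1
      have hne : v ≠ (⟨0, by omega⟩ : Fin n) := by
        intro h; rw [Fin.ext_iff] at h; simp at h; omega
      have hadj : ∀ u : Fin n, (oneEdge n).Adj v u ↔ u = (⟨0, by omega⟩ : Fin n) := by
        intro u
        constructor
        · rintro (⟨h, -⟩ | ⟨-, h⟩)
          · omega
          · exact Fin.ext h
        · rintro rfl; exact Or.inr ⟨h1, rfl⟩
      have : ∀ u : Fin n, (if (oneEdge n).Adj v u then (1:ℕ) else 0)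
          = if u = (⟨0, by omega⟩ : Fin n) then 1 else 0 := by
        intro u; by_cases h : (oneEdge n).Adj v u
        · rw [if_pos h, if_pos ((hadj u).mp h)]
        · rw [if_neg h, if_neg (fun hu => h ((hadj u).mpr hu))]
      rw [Finset.sum_congr rfl fun u _ => this u, Finset.sum_ite_eq' _ _ (fun _ => 1),
        if_pos (Finset.mem_univ _), if_pos hv, if_neg hne]
    · have hne0 : v ≠ (⟨0, by omega⟩ : Fin n) := by
        intro h; rw [Fin.ext_iff] at h; simp at h; omega
      have hne1 : v ≠ (⟨1, by omega⟩ : Fin n) := by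
        intro h; rw [Fin.ext_iff] at h; simp at h; omega
      have : ∀ u : Fin n, (if (oneEdge n).Adj v u then (1:ℕ) else 0) = 0 := by
        intro u
        rw [if_neg]
        rintro (⟨h, -⟩ | ⟨h, -⟩) <;> omega
      rw [Finset.sum_congr rfl fun u _ => this u, if_neg hne0, if_neg hne1]
      simp

lemma oneEdge_degsum (hn : 2 ≤ n) : ∑ v, gdeg (oneEdge n) v = 2 := by
  rw [Finset.sum_congr rfl fun v _ => oneEdge_deg hn v, Finset.sum_add_distrib,
    Finset.sum_ite_eq' _ _ (fun _ => 1), Finset.sum_ite_eq' _ _ (fun _ => 1),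
    if_pos (Finset.mem_univ _), if_pos (Finset.mem_univ _)]

lemma oneEdge_degsq (hn : 2 ≤ n) : ∑ v, gdeg (oneEdge n) v ^ 2 = 2 := by
  have hptw : ∀ v : Fin n, gdeg (oneEdge n) v ^ 2 = gdeg (oneEdge n) v := by
    intro v
    rw [oneEdge_deg hn v]
    by_cases h0 : v = (⟨0, by omega⟩ : Fin n) <;> by_cases h1 : v = (⟨1, by omega⟩ : Fin n) <;>
      simp [h0, h1]
  rw [Finset.sum_congr rfl fun v _ => hptw v, oneEdge_degsum hn]

lemma oneEdge_M1 (hn : 2 ≤ n) : zagrebM1 (oneEdge n) = 2 := oneEdge_degsq hn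

lemma oneEdge_gsize (hn : 2 ≤ n) : gsize (oneEdge n) = 1 := by
  have h := handshake (oneEdge n)
  rw [oneEdge_degsum hn] at h
  omega

lemma oneEdge_M2 (hn : 2 ≤ n) : zagrebM2 (oneEdge n) = 1 := by
  have h := two_mul_zagrebM2 (oneEdge n)
  have hptw : ∀ u v : Fin n,
      (if (oneEdge n).Adj u v then gdeg (oneEdge n) u * gdeg (oneEdge n) v else 0)
        = if (oneEdge n).Adj u v then 1 else 0 := by
    intro u v
    by_cases hadj : (oneEdge n).Adj u v
    · rw [if_pos hadj, if_pos hadj]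
      have hdu : gdeg (oneEdge n) u = 1 := by
        rw [oneEdge_deg hn u]
        rcases hadj with ⟨h1, -⟩ | ⟨h1, -⟩
        · rw [if_pos (Fin.ext h1), if_neg (by intro h; rw [Fin.ext_iff] at h; simp at h; omega)]
        · rw [if_neg (by intro h; rw [Fin.ext_iff] at h; simp at h; omega), if_pos (Fin.ext h1)]
      have hdv : gdeg (oneEdge n) v = 1 := by
        rw [oneEdge_deg hn v]
        rcases hadj with ⟨-, h1⟩ | ⟨-, h1⟩
        · rw [if_neg (by intro h; rw [Fin.ext_iff] at h; simp at h; omega), if_pos (Fin.ext h1)]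
        · rw [if_pos (Fin.ext h1), if_neg (by intro h; rw [Fin.ext_iff] at h; simp at h; omega)]
      rw [hdu, hdv]
    · rw [if_neg hadj, if_neg hadj]
  rw [Finset.sum_congr rfl fun u _ => Finset.sum_congr rfl fun v _ => hptw u v] at h
  have h2 : (∑ u : Fin n, ∑ v : Fin n, if (oneEdge n).Adj u v then (1:ℕ) else 0)
      = ∑ v, gdeg (oneEdge n) v :=
    Finset.sum_congr rfl fun u _ => (gdeg_eq_sum (oneEdge n) u).symm
  rw [h2, oneEdge_degsum hn] at h
  omega

lemma oneEdge_in_C (hn : 3 < n) :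
    gsize (oneEdge n) * zagrebM1 (oneEdge n) < n * zagrebM2 (oneEdge n) := by
  have h2 : 2 ≤ n := by omega
  rw [oneEdge_gsize h2, oneEdge_M1 h2, oneEdge_M2 h2]
  omega

lemma oneEdge_compl_in_C (hn : 3 < n) :
    gsize (oneEdge n)ᶜ * zagrebM1 (oneEdge n)ᶜ < n * zagrebM2 (oneEdge n)ᶜ := by
  have h2 : 2 ≤ n := by omega
  have hid := master_identity (V := Fin n) (oneEdge n)
  have hc : (Fintype.card (Fin n) : ℤ) = n := by simp
  have hQ : (∑ v, (gdeg (oneEdge n) v : ℤ)^2) = 2 := by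
    exact_mod_cast oneEdge_degsq h2
  have hS : (∑ v, (gdeg (oneEdge n) v : ℤ)) = 2 := by
    exact_mod_cast oneEdge_degsum h2
  rw [hc, hQ, hS, oneEdge_gsize h2, oneEdge_M1 h2, oneEdge_M2 h2] at hid
  have hfin : (gsize (oneEdge n)ᶜ : ℤ) * zagrebM1 (oneEdge n)ᶜ
      < (n : ℤ) * zagrebM2 (oneEdge n)ᶜ := by
    have hn' : (4:ℤ) ≤ (n:ℤ) := by exact_mod_cast hn
    push_cast at hid
    nlinarith [hid, hn']
  exact_mod_cast hfin

end witness

section isoinv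
open scoped Classical
variable {V W : Type*} [Fintype V] [Fintype W]

lemma iso_gdeg {G : SimpleGraph V} {H : SimpleGraph W} (φ : G ≃g H) (v : V) :
    gdeg H (φ v) = gdeg G v := by
  rw [gdeg_eq_sum, gdeg_eq_sum]
  rw [← Equiv.sum_comp φ.toEquiv (fun u => if H.Adj (φ v) u then (1:ℕ) else 0)]
  simp only [RelIso.coe_fn_toEquiv]
  refine Finset.sum_congr rfl fun u _ => ?_
  by_cases h : G.Adj v u
  · rw [if_pos h, if_pos (φ.map_adj_iff.mpr h)]
  · rw [if_neg h, if_neg (fun hc => h (φ.map_adj_iff.mp hc))]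

lemma iso_degsum {G : SimpleGraph V} {H : SimpleGraph W} (φ : G ≃g H) :
    ∑ v, gdeg G v = ∑ v, gdeg H v := by
  conv_rhs => rw [← Equiv.sum_comp φ.toEquiv (fun v => gdeg H v)]
  simp only [RelIso.coe_fn_toEquiv]
  exact Finset.sum_congr rfl fun v _ => (iso_gdeg φ v).symm

lemma iso_M1 {G : SimpleGraph V} {H : SimpleGraph W} (φ : G ≃g H) :
    zagrebM1 G = zagrebM1 H := by
  unfold zagrebM1
  conv_rhs => rw [← Equiv.sum_comp φ.toEquiv (fun v => gdeg H v ^ 2)]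
  simp only [RelIso.coe_fn_toEquiv]
  exact Finset.sum_congr rfl fun v _ => by rw [iso_gdeg φ v]

lemma iso_gsize {G : SimpleGraph V} {H : SimpleGraph W} (φ : G ≃g H) :
    gsize G = gsize H := by
  have h1 := handshake G
  have h2 := handshake H
  have h3 := iso_degsum φ
  omega

lemma iso_M2 {G : SimpleGraph V} {H : SimpleGraph W} (φ : G ≃g H) :
    zagrebM2 G = zagrebM2 H := by
  have h1 := two_mul_zagrebM2 G
  have h2 := two_mul_zagrebM2 H
  have key : (∑ u, ∑ v, (if G.Adj u v then gdeg G u * gdeg G v else 0))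
      = ∑ u, ∑ v, (if H.Adj u v then gdeg H u * gdeg H v else 0) := by
    conv_rhs => rw [← Equiv.sum_comp φ.toEquiv
      (fun u => ∑ v, (if H.Adj u v then gdeg H u * gdeg H v else 0))]
    simp only [RelIso.coe_fn_toEquiv]
    refine Finset.sum_congr rfl fun u _ => ?_
    conv_rhs => rw [← Equiv.sum_comp φ.toEquiv
      (fun v => if H.Adj (φ u) v then gdeg H (φ u) * gdeg H v else 0)]
    simp only [RelIso.coe_fn_toEquiv]
    refine Finset.sum_congr rfl fun v _ => ?_
    by_cases h : G.Adj u v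
    · rw [if_pos h, if_pos (φ.map_adj_iff.mpr h), iso_gdeg φ u, iso_gdeg φ v]
    · rw [if_neg h, if_neg (fun hc => h (φ.map_adj_iff.mp hc))]
  omega

/-- An isomorphism of graphs induces an isomorphism of their complements. -/
def isoCompl {G : SimpleGraph V} {H : SimpleGraph W} (φ : G ≃g H) : Gᶜ ≃g Hᶜ where
  toEquiv := φ.toEquiv
  map_rel_iff' := by
    intro a b
    simp only [SimpleGraph.compl_adj, RelIso.coe_fn_toEquiv]
    rw [φ.map_adj_iff]
    constructor
    · rintro ⟨h1, h2⟩; exact ⟨fun h => h1 (by rw [h]), h2⟩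
    · rintro ⟨h1, h2⟩; exact ⟨fun h => h1 (φ.toEquiv.injective h), h2⟩

end isoinv

section final
open scoped Classical
variable {n : ℕ}

lemma mem_isoClassesOf {P : SimpleGraph (Fin n) → Prop}
    (hP : ∀ G H : SimpleGraph (Fin n), (G ≃g H) → P G → P H) (G : SimpleGraph (Fin n)) :
    (Quotient.mk (graphIsoSetoid n) G ∈ isoClassesOf n P) ↔ P G := by
  constructor
  · rintro ⟨H, hH, hquot⟩
    have hiso : Nonempty (H ≃g G) := Quotient.exact hquot
    exact hP H G hiso.some hH
  · intro h
    exact ⟨G, h, rfl⟩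

noncomputable def kappa (n : ℕ) : IsoClasses n → IsoClasses n :=
  Quotient.map (fun G => Gᶜ) (fun _ _ ⟨φ⟩ => ⟨isoCompl φ⟩)

lemma kappa_mk (G : SimpleGraph (Fin n)) :
    kappa n (Quotient.mk (graphIsoSetoid n) G) = Quotient.mk (graphIsoSetoid n) Gᶜ := rfl

lemma kappa_involutive : Function.Involutive (kappa n) := by
  intro x
  induction x using Quotient.ind with
  | _ G =>
    rw [kappa_mk, kappa_mk]
    exact congrArg _ (compl_compl G)

instance : Finite (IsoClasses n) := by
  unfold IsoClasses
  infer_instance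

end final

/-- For `n > 3`, with `A`, `C` the sets of isomorphism classes of
graphs of order `n` and size `m` satisfying `m·M1 > n·M2` and `m·M1 < n·M2`
respectively, one has `|A| < |C|`. -/
theorem stmt_11 (n : ℕ) (hn : 3 < n)
    (A : Set (IsoClasses n)) (C : Set (IsoClasses n))
    (hA : A = isoClassesOf n fun G => gsize G * zagrebM1 G > n * zagrebM2 G)
    (hC : C = isoClassesOf n fun G => gsize G * zagrebM1 G < n * zagrebM2 G) :
    A.ncard < C.ncard := by
  classical
  subst hA hC
  have hinvA : ∀ G H : SimpleGraph (Fin n), (G ≃g H) →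
      (gsize G * zagrebM1 G > n * zagrebM2 G) →
      (gsize H * zagrebM1 H > n * zagrebM2 H) :=
    fun G H φ h => by rwa [iso_gsize φ, iso_M1 φ, iso_M2 φ] at h
  have hinvC : ∀ G H : SimpleGraph (Fin n), (G ≃g H) →
      (gsize G * zagrebM1 G < n * zagrebM2 G) →
      (gsize H * zagrebM1 H < n * zagrebM2 H) :=
    fun G H φ h => by rwa [iso_gsize φ, iso_M1 φ, iso_M2 φ] at h
  have hflip : ∀ G : SimpleGraph (Fin n), gsize G * zagrebM1 G > n * zagrebM2 G →
      gsize Gᶜ * zagrebM1 Gᶜ < n * zagrebM2 Gᶜ := by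
    intro G h
    have hcard : Fintype.card (Fin n) = n := Fintype.card_fin n
    have h' : (Fintype.card (Fin n) : ℤ) * zagrebM2 G < (gsize G : ℤ) * zagrebM1 G := by
      rw [hcard]; exact_mod_cast h
    have h2 : 2 ≤ Fintype.card (Fin n) := by omega
    have hout := zagreb_flip G h' h2
    rw [hcard] at hout
    exact_mod_cast hout
  have himg : kappa n '' (isoClassesOf n fun G => gsize G * zagrebM1 G > n * zagrebM2 G)
      ⊆ isoClassesOf n fun G => gsize G * zagrebM1 G < n * zagrebM2 G := by
    rintro x ⟨a, ha, rfl⟩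
    induction a using Quotient.ind with
    | _ G =>
      rw [kappa_mk]
      erw [mem_isoClassesOf hinvA] at ha
      erw [mem_isoClassesOf hinvC]
      exact hflip G ha
  have hinj : Function.Injective (kappa n) := kappa_involutive.injective
  have hx1 : Quotient.mk (graphIsoSetoid n) (oneEdge n)
      ∈ isoClassesOf n fun G => gsize G * zagrebM1 G < n * zagrebM2 G := by
    rw [mem_isoClassesOf hinvC]; exact oneEdge_in_C hn
  have hx2 : Quotient.mk (graphIsoSetoid n) (oneEdge n)
      ∉ kappa n '' (isoClassesOf n fun G => gsize G * zagrebM1 G > n * zagrebM2 G) := by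
    rintro ⟨a, ha, hka⟩
    have haeq : a = kappa n (Quotient.mk (graphIsoSetoid n) (oneEdge n)) := by
      rw [← hka]; exact (kappa_involutive a).symm
    rw [haeq, kappa_mk] at ha
    erw [mem_isoClassesOf hinvA] at ha
    exact lt_irrefl _ (lt_trans (oneEdge_compl_in_C hn) ha)
  have hss : kappa n '' (isoClassesOf n fun G => gsize G * zagrebM1 G > n * zagrebM2 G)
      ⊂ isoClassesOf n fun G => gsize G * zagrebM1 G < n * zagrebM2 G :=
    ⟨himg, fun hsub => hx2 (hsub hx1)⟩
  calc (isoClassesOf n fun G => gsize G * zagrebM1 G > n * zagrebM2 G).ncard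
      = (kappa n '' (isoClassesOf n fun G =>
          gsize G * zagrebM1 G > n * zagrebM2 G)).ncard :=
        (Set.ncard_image_of_injective _ hinj).symm
    _ < _ := Set.ncard_lt_ncard hss (Set.toFinite _)
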